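/- Conversely, if a locally finite weighted graph satisfies the gradient bound Γ(P_t f) ≤ e^{−2Kt} P_t(Γ(f)) for all finitely supported f and all t ≥ 0, then it satisfies CD(K,∞): Γ₂(f)(x) ≥ KΓ(f)(x) for all finitely supported f and all x. (The proof differentiates F(t) = e^{−2Kt}P_t(Γ(f))(x) − Γ(P_t f)(x) at t = 0, using F ≥ 0 and F(0) = 0.) -/

import Mathlib

open scoped BigOperators
open Filter

/-- The carré du champ operator. -/
noncomputable def gam {V : Type*} (m : V → ℝ) (μ : V → V → ℝ) (f g : V → ℝ) (x : V) : ℝ :=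
  (1 / (2 * m x)) * ∑' y, μ x y * (f y - f x) * (g y - g x)

/-- The formal graph Laplacian. -/
noncomputable def lap {V : Type*} (m : V → ℝ) (μ : V → V → ℝ) (f : V → ℝ) (x : V) : ℝ :=
  (1 / m x) * ∑' y, μ x y * (f y - f x)

/-- The Dirichlet energy `Q(f) = (1/2) ∑_{x,y} μ_{xy} (f y - f x)²`. -/
noncomputable def QN {V : Type*} (μ : V → V → ℝ) (f : V → ℝ) : ℝ :=
  (1 / 2) * ∑' p : V × V, μ p.1 p.2 * (f p.2 - f p.1) ^ 2

/-- The `ℓ²(V,m)` norm. -/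
noncomputable def l2n {V : Type*} (m : V → ℝ) (f : V → ℝ) : ℝ :=
  Real.sqrt (∑' x, f x ^ 2 * m x)

/-- The iterated carré du champ `Γ₂(f) = (1/2) Δ Γ(f) - Γ(f, Δ f)`. -/
noncomputable def gam2 {V : Type*} (m : V → ℝ) (μ : V → V → ℝ) (f : V → ℝ) (x : V) : ℝ :=
  (1 / 2) * lap m μ (fun y => gam m μ f f y) x - gam m μ f (lap m μ f) x

/-- Converse: if the gradient bound `Γ(P_t f) ≤ e^{-2Kt} P_t(Γ(f))` holds for all finitely
supported `f` and all `t ≥ 0`, then `CD(K,∞)` holds on finitely supported functions: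
`Γ₂(f)(x) ≥ K Γ(f)(x)`. -/
theorem stmt16 {V : Type*} (m : V → ℝ) (μ : V → V → ℝ)
    (hm : ∀ x, 0 < m x) (hsym : ∀ x y, μ x y = μ y x)
    (hnn : ∀ x y, 0 ≤ μ x y) (hlf : ∀ x, (Function.support (μ x)).Finite)
    -- the heat semigroup `P t = e^{tΔ}` and its standard properties
    (P : ℝ → (V → ℝ) → V → ℝ)
    (hP0 : ∀ f, P 0 f = f)
    (hheat : ∀ (f : V → ℝ) (x : V) (t : ℝ), HasDerivAt (fun s => P s f x) (lap m μ (P t f) x) t)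
    (hPcomm : ∀ f : V → ℝ, (Function.support f).Finite → ∀ t, P t (lap m μ f) = lap m μ (P t f))
    (hPl2 : ∀ f : V → ℝ, Summable (fun x => f x ^ 2 * m x) → ∀ t, 0 ≤ t →
      Summable (fun x => (P t f x) ^ 2 * m x) ∧ ∑' x, (P t f x) ^ 2 * m x ≤ ∑' x, f x ^ 2 * m x)
    (hPsym : ∀ f g : V → ℝ, Summable (fun x => f x ^ 2 * m x) →
      Summable (fun x => g x ^ 2 * m x) → ∀ t, 0 ≤ t →
      ∑' x, P t f x * g x * m x = ∑' x, f x * P t g x * m x)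
    (hPpos : ∀ f : V → ℝ, (∀ x, 0 ≤ f x) → ∀ t, 0 ≤ t → ∀ x, 0 ≤ P t f x)
    -- `(d/dt)|_{t=0} P_t g (x) = Δ g (x)` for finitely supported `g`
    (hderiv0 : ∀ g : V → ℝ, (Function.support g).Finite → ∀ x : V,
      HasDerivAt (fun t => P t g x) (lap m μ g x) 0)
    (K : ℝ)
    (hgrad : ∀ f : V → ℝ, (Function.support f).Finite → ∀ t, 0 ≤ t → ∀ x : V,
      gam m μ (P t f) (P t f) x ≤ Real.exp (-2 * K * t) * P t (fun y => gam m μ f f y) x) :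
    ∀ f : V → ℝ, (Function.support f).Finite → ∀ x : V,
      K * gam m μ f f x ≤ gam2 m μ f x := by
  intro f hf x
  classical
  set γ : V → ℝ := fun y => gam m μ f f y with hγdef
  -- Γ(f) has finite support
  have hγsupp : (Function.support γ).Finite := by
    have hsub : Function.support γ ⊆
        (Function.support f) ∪ ⋃ y ∈ Function.support f, Function.support (μ y) := by
      intro z hz
      by_cases hzf : z ∈ Function.support f
      · exact Set.mem_union_left _ hzf
      · have hfz : f z = 0 := Function.notMem_support.mp hzf
        have hz' : γ z ≠ 0 := hz
        have htsum : (∑' y, μ z y * (f y - f z) * (f y - f z)) ≠ 0 := by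
          intro h0
          apply hz'
          simp only [hγdef, gam, h0, mul_zero]
        obtain ⟨y, hy⟩ : ∃ y, μ z y * (f y - f z) * (f y - f z) ≠ 0 := by
          by_contra hcon
          push_neg at hcon
          apply htsum
          simp [hcon]
        have hμ : μ z y ≠ 0 := fun h => hy (by simp [h])
        have hfy : f y ≠ 0 := by
          intro h
          apply hy
          simp [h, hfz]
        refine Set.mem_union_right _ ?_
        refine Set.mem_biUnion hfy ?_
        simpa [Function.mem_support, hsym y z] using hμ
    exact Set.Finite.subset (hf.union (Set.Finite.biUnion hf (fun y _ => hlf y))) hsub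
  -- the finite vertex set of neighbors of x
  set S : Finset V := (hlf x).toFinset with hSdef
  have hS : ∀ y, y ∉ S → μ x y = 0 := by
    intro y hy
    by_contra h
    exact hy ((hlf x).mem_toFinset.mpr h)
  -- rewrite gam as a finite sum
  have hgamfin : ∀ (g h : V → ℝ), gam m μ g h x =
      (1 / (2 * m x)) * ∑ y ∈ S, μ x y * (g y - g x) * (h y - h x) := by
    intro g h
    unfold gam
    congr 1
    exact tsum_eq_sum (fun y hy => by rw [hS y hy]; ring)
  -- derivative of t ↦ Γ(P_t f)(x) at 0
  have hD1 : HasDerivAt (fun t => gam m μ (P t f) (P t f) x)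
      (2 * gam m μ f (lap m μ f) x) 0 := by
    have hterm : ∀ y : V, HasDerivAt (fun t => μ x y * (P t f y - P t f x) * (P t f y - P t f x))
        (μ x y * (2 * (f y - f x) * (lap m μ f y - lap m μ f x))) 0 := by
      intro y
      have hy := hheat f y 0
      have hx := hheat f x 0
      rw [hP0] at hy hx
      have hd : HasDerivAt (fun t => P t f y - P t f x) (lap m μ f y - lap m μ f x) 0 :=
        hy.sub hx
      have this : HasDerivAt (fun t => μ x y * ((P t f y - P t f x) * (P t f y - P t f x))) (μ x y * ((lap m μ f y - lap m μ f x) * (P 0 f y - P 0 f x) + (P 0 f y - P 0 f x) * (lap m μ f y - lap m μ f x))) 0 := (hd.fun_mul hd).const_mul (μ x y)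
      convert this using 1
      · ext t; ring
      · rw [hP0]; ring
    have hsum : HasDerivAt
        (fun t => (1 / (2 * m x)) * ∑ y ∈ S, μ x y * (P t f y - P t f x) * (P t f y - P t f x))
        ((1 / (2 * m x)) * ∑ y ∈ S, μ x y * (2 * (f y - f x) * (lap m μ f y - lap m μ f x))) 0 :=
      (HasDerivAt.fun_sum (fun y _ => hterm y)).const_mul _
    have heq : (fun t => gam m μ (P t f) (P t f) x) =
        (fun t => (1 / (2 * m x)) * ∑ y ∈ S, μ x y * (P t f y - P t f x) * (P t f y - P t f x)) := by
      funext t; exact hgamfin _ _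
    rw [heq]
    convert hsum using 1
    rw [hgamfin, Finset.mul_sum, Finset.mul_sum, Finset.mul_sum]
    exact Finset.sum_congr rfl fun y _ => by ring
  -- derivative of t ↦ e^{-2Kt} P_t Γ(f)(x) at 0
  have hD2 : HasDerivAt (fun t => Real.exp (-2 * K * t) * P t γ x)
      ((-2 * K) * γ x + lap m μ γ x) 0 := by
    have hexp : HasDerivAt (fun t : ℝ => Real.exp (-2 * K * t)) (-2 * K) 0 := by
      have h1 : HasDerivAt (fun t : ℝ => -2 * K * t) (-2 * K) 0 := by
        simpa using (hasDerivAt_id (0:ℝ)).const_mul (-2 * K)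
      have := h1.exp
      simpa using this
    have hPd := hderiv0 γ hγsupp x
    have this : HasDerivAt (fun t => Real.exp (-2 * K * t) * P t γ x) (-2 * K * P 0 γ x + Real.exp (-2 * K * 0) * lap m μ γ x) 0 := hexp.fun_mul hPd
    convert this using 1
    simp [hP0]
  -- F and its properties
  set F : ℝ → ℝ := fun t => Real.exp (-2 * K * t) * P t γ x - gam m μ (P t f) (P t f) x with hFdef
  have hF0 : F 0 = 0 := by
    simp [hFdef, hP0, hγdef]
  have hFnn : ∀ t, 0 ≤ t → 0 ≤ F t := by
    intro t ht
    have := hgrad f hf t ht x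
    simp only [hFdef]
    linarith
  have hFD : HasDerivAt F ((-2 * K) * γ x + lap m μ γ x - 2 * gam m μ f (lap m μ f) x) 0 :=
    hD2.sub hD1
  -- the derivative at 0 is nonnegative
  have hd0 : 0 ≤ (-2 * K) * γ x + lap m μ γ x - 2 * gam m μ f (lap m μ f) x := by
    have hslope := hasDerivAt_iff_tendsto_slope.mp hFD
    have hslope' : Filter.Tendsto (slope F 0) (nhdsWithin 0 (Set.Ioi 0))
        (nhds ((-2 * K) * γ x + lap m μ γ x - 2 * gam m μ f (lap m μ f) x)) :=
      hslope.mono_left (nhdsWithin_mono 0 (fun t ht => ne_of_gt ht))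
    refine ge_of_tendsto hslope' ?_
    filter_upwards [self_mem_nhdsWithin] with t ht
    have ht' : (0:ℝ) < t := ht
    rw [slope_def_field]
    rw [hF0]
    simp only [sub_zero]
    exact div_nonneg (hFnn t ht'.le) ht'.le
  -- conclude
  have hγx : γ x = gam m μ f f x := rfl
  simp only [gam2]
  have hlapγ : lap m μ (fun y => gam m μ f f y) x = lap m μ γ x := rfl
  rw [hlapγ]
  linarith [hd0, hγx ▸ hd0]
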